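/- arXiv:2006.03538 — 3 statements merged into one kernel-verified Lean document; each statement's English description precedes it below -/
import Mathlib

section
/- Let u = (u₁,u₂), v = (v₁,v₂) be linearly independent unit vectors in ℝ² and let f = (f₁, f₂) be a vector field on ℝ² with f₁, f₂ ∈ C²_c(ℝ²). Then for every x ∈ ℝ², X_u f₁(x) - X_v f₁(x) = ∂(I f)/∂x₁ (x) + u₂ · X¹_u(curl f)(x) - v₂ · X¹_v(curl f)(x). -/
open MeasureTheory Matrix

noncomputable section

/-- Dot product on ℝ². -/
def dot2 (u v : ℝ × ℝ) : ℝ := u.1 * v.1 + u.2 * v.2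

/-- `x^⊥ = (-x₂, x₁)`. -/
def perp2 (x : ℝ × ℝ) : ℝ × ℝ := (-x.2, x.1)

/-- Divergent beam transform `X_u h (x) = ∫₀^∞ h(x + t u) dt`. -/
def Xbeam (u : ℝ × ℝ) (h : ℝ × ℝ → ℝ) (x : ℝ × ℝ) : ℝ :=
  ∫ t in Set.Ioi (0 : ℝ), h (x + t • u)

/-- First moment divergent beam transform `X¹_u h (x) = ∫₀^∞ t h(x + t u) dt`. -/
def Xmom (u : ℝ × ℝ) (h : ℝ × ℝ → ℝ) (x : ℝ × ℝ) : ℝ :=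
  ∫ t in Set.Ioi (0 : ℝ), t * h (x + t • u)

/-- Directional derivative `D_u h = u · ∇ h`. -/
def Ddir (u : ℝ × ℝ) (h : ℝ × ℝ → ℝ) (x : ℝ × ℝ) : ℝ := fderiv ℝ h x u

/-- Twice continuously differentiable, compactly supported. -/
def IsC2c (h : ℝ × ℝ → ℝ) : Prop := ContDiff ℝ 2 h ∧ HasCompactSupport h

/-- `div f = ∂f₁/∂x₁ + ∂f₂/∂x₂`. -/
def divf (f₁ f₂ : ℝ × ℝ → ℝ) (x : ℝ × ℝ) : ℝ :=
  fderiv ℝ f₁ x (1, 0) + fderiv ℝ f₂ x (0, 1)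

/-- `curl f = ∂f₂/∂x₁ - ∂f₁/∂x₂`. -/
def curlf (f₁ f₂ : ℝ × ℝ → ℝ) (x : ℝ × ℝ) : ℝ :=
  fderiv ℝ f₂ x (1, 0) - fderiv ℝ f₁ x (0, 1)

/-- Longitudinal V-line transform `L f = -X_u (f·u) + X_v (f·v)`. -/
def VlineL (u v : ℝ × ℝ) (f₁ f₂ : ℝ × ℝ → ℝ) (x : ℝ × ℝ) : ℝ :=
  - Xbeam u (fun y => f₁ y * u.1 + f₂ y * u.2) x
  + Xbeam v (fun y => f₁ y * v.1 + f₂ y * v.2) x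

/-- Transverse V-line transform `T f = -X_u (f·u^⊥) + X_v (f·v^⊥)`. -/
def VlineT (u v : ℝ × ℝ) (f₁ f₂ : ℝ × ℝ → ℝ) (x : ℝ × ℝ) : ℝ :=
  - Xbeam u (fun y => f₁ y * (perp2 u).1 + f₂ y * (perp2 u).2) x
  + Xbeam v (fun y => f₁ y * (perp2 v).1 + f₂ y * (perp2 v).2) x

/-- First moment longitudinal V-line transform `I f = -X¹_u (f·u) + X¹_v (f·v)`. -/
def VmomL (u v : ℝ × ℝ) (f₁ f₂ : ℝ × ℝ → ℝ) (x : ℝ × ℝ) : ℝ :=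
  - Xmom u (fun y => f₁ y * u.1 + f₂ y * u.2) x
  + Xmom v (fun y => f₁ y * v.1 + f₂ y * v.2) x

/-- First moment transverse V-line transform `J f = -X¹_u (f·u^⊥) + X¹_v (f·v^⊥)`. -/
def VmomT (u v : ℝ × ℝ) (f₁ f₂ : ℝ × ℝ → ℝ) (x : ℝ × ℝ) : ℝ :=
  - Xmom u (fun y => f₁ y * (perp2 u).1 + f₂ y * (perp2 u).2) x
  + Xmom v (fun y => f₁ y * (perp2 v).1 + f₂ y * (perp2 v).2) x

/-- Radon transform `R h (ψ, s) = ∫_ℝ h (s ψ + t ψ^⊥) dt`. -/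
def Radon2 (h : ℝ × ℝ → ℝ) (ψ : ℝ × ℝ) (s : ℝ) : ℝ :=
  ∫ t : ℝ, h (s • ψ + t • perp2 ψ)

/-- The (vector-valued) star transform. -/
def starS (m : ℕ) (γ : Fin m → ℝ × ℝ) (c : Fin m → ℝ)
    (f₁ f₂ : ℝ × ℝ → ℝ) (x : ℝ × ℝ) : ℝ × ℝ :=
  ∑ i, c i •
    (Xbeam (γ i) (fun y => f₁ y * (γ i).1 + f₂ y * (γ i).2) x,
     Xbeam (γ i) (fun y => f₁ y * (perp2 (γ i)).1 + f₂ y * (perp2 (γ i)).2) x)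

/-- `γ(ψ) = -∑ cᵢ γᵢ / (ψ·γᵢ)`. -/
def starGamma (m : ℕ) (γ : Fin m → ℝ × ℝ) (c : Fin m → ℝ) (ψ : ℝ × ℝ) : ℝ × ℝ :=
  - ∑ i, (c i / dot2 ψ (γ i)) • γ i

/-- A star configuration is symmetric if `m = 2k` and, after re-indexing by a
permutation, `γᵢ = -γ_{k+i}` and `cᵢ = -c_{k+i}` for `i = 1, …, k`. -/
def StarSymmetric (m : ℕ) (γ : Fin m → ℝ × ℝ) (c : Fin m → ℝ) : Prop :=
  ∃ k : ℕ, ∃ hk : m = 2 * k, ∃ σ : Equiv.Perm (Fin m),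
    ∀ i : Fin m, ∀ hi : (i : ℕ) < k,
      γ (σ i) = - γ (σ ⟨(i : ℕ) + k, by omega⟩) ∧
      c (σ i) = - c (σ ⟨(i : ℕ) + k, by omega⟩)


lemma supp_aux {E : Type*} [NormedAddCommGroup E] (w x : ℝ × ℝ) (hw : w ≠ 0)
    (k : ℝ × ℝ → E) (hk : HasCompactSupport k) :
    HasCompactSupport (fun t : ℝ => k (x + t • w)) := by
  obtain ⟨R, hR⟩ := hk.isBounded.subset_closedBall 0
  have hwpos : 0 < ‖w‖ := norm_pos_iff.mpr hw
  refine HasCompactSupport.intro (isCompact_Icc (a := -((R + ‖x‖)/‖w‖)) (b := (R + ‖x‖)/‖w‖))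
    fun t ht => ?_
  by_contra hne
  have hmem : x + t • w ∈ tsupport k := subset_tsupport k hne
  have h1 : ‖x + t • w‖ ≤ R := by simpa using hR hmem
  have h2 : ‖t • w‖ ≤ R + ‖x‖ := by
    have h3 : t • w = (x + t • w) - x := by abel
    calc ‖t • w‖ = ‖(x + t • w) - x‖ := by rw [← h3]
    _ ≤ ‖x + t • w‖ + ‖x‖ := norm_sub_le _ _
    _ ≤ R + ‖x‖ := by linarith
  rw [norm_smul, Real.norm_eq_abs] at h2
  have : |t| ≤ (R + ‖x‖)/‖w‖ := by
    rw [le_div_iff₀ hwpos]; linarith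
  exact ht (abs_le.mp this |> fun ⟨a,b⟩ => Set.mem_Icc.mpr ⟨a,b⟩)

lemma integrable_aux (w x : ℝ × ℝ) (hw : w ≠ 0) (k : ℝ × ℝ → ℝ)
    (hkc : Continuous k) (hks : HasCompactSupport k) :
    IntegrableOn (fun t : ℝ => t * k (x + t • w)) (Set.Ioi 0) volume := by
  apply Integrable.integrableOn
  apply Continuous.integrable_of_hasCompactSupport
  · exact continuous_id.mul (hkc.comp (by continuity))
  · exact (supp_aux w x hw k hks).mul_left

lemma integrable_aux' (w x : ℝ × ℝ) (hw : w ≠ 0) (k : ℝ × ℝ → ℝ)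
    (hkc : Continuous k) (hks : HasCompactSupport k) :
    IntegrableOn (fun t : ℝ => k (x + t • w)) (Set.Ioi 0) volume := by
  apply Integrable.integrableOn
  exact Continuous.integrable_of_hasCompactSupport (hkc.comp (by continuity))
    (supp_aux w x hw k hks)

lemma fderiv_apply_cont (h : ℝ × ℝ → ℝ) (hh : ContDiff ℝ 1 h) (e : ℝ × ℝ) :
    Continuous (fun z => fderiv ℝ h z e) :=
  (hh.continuous_fderiv one_ne_zero).clm_apply continuous_const

lemma fderiv_apply_supp (h : ℝ × ℝ → ℝ) (hs : HasCompactSupport h) (e : ℝ × ℝ) :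
    HasCompactSupport (fun z => fderiv ℝ h z e) :=
  HasCompactSupport.fderiv_apply (𝕜 := ℝ) hs e

set_option maxHeartbeats 1000000 in
lemma ibp_aux (w x : ℝ × ℝ) (hw : w ≠ 0) (h : ℝ × ℝ → ℝ)
    (hh : ContDiff ℝ 1 h) (hs : HasCompactSupport h) :
    ∫ t in Set.Ioi (0:ℝ), t * fderiv ℝ h (x + t • w) w
      = - ∫ t in Set.Ioi (0:ℝ), h (x + t • w) := by
  have hline : ∀ t : ℝ, HasDerivAt (fun t : ℝ => x + t • w) w t := by
    intro t
    have h1 : HasDerivAt (fun t : ℝ => t • w) w t := by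
      simpa using (hasDerivAt_id t).smul_const w
    exact h1.const_add x
  have hφ : ∀ t : ℝ, HasDerivAt (fun t => h (x + t • w)) (fderiv ℝ h (x + t • w) w) t :=
    fun t => ((hh.differentiable one_ne_zero _).hasFDerivAt.comp_hasDerivAt t (hline t))
  have hg : ∀ t : ℝ, HasDerivAt (fun t => t * h (x + t • w))
      (h (x + t • w) + t * fderiv ℝ h (x + t • w) w) t := by
    intro t
    have := (hasDerivAt_id t).mul (hφ t)
    simpa [Pi.mul_def] using this
  have hA : IntegrableOn (fun t : ℝ => h (x + t • w)) (Set.Ioi 0) volume :=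
    integrable_aux' w x hw h (hh.continuous) hs
  have hB : IntegrableOn (fun t : ℝ => t * fderiv ℝ h (x + t • w) w) (Set.Ioi 0) volume :=
    integrable_aux w x hw (fun z => fderiv ℝ h z w) (fderiv_apply_cont h hh w) (fderiv_apply_supp h hs w)
  have hgs : HasCompactSupport (fun t : ℝ => t * h (x + t • w)) :=
    (supp_aux w x hw h hs).mul_left
  have htend : Filter.Tendsto (fun t : ℝ => t * h (x + t • w)) Filter.atTop (nhds 0) := by
    obtain ⟨T, hT⟩ := hgs.isBounded.subset_closedBall 0
    apply Filter.Tendsto.congr' _ tendsto_const_nhds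
    filter_upwards [Filter.eventually_gt_atTop T] with t ht
    by_contra hne
    have := hT (subset_tsupport _ (fun hz => hne (by rw [hz])))
    simp only [Metric.mem_closedBall, Real.dist_eq, sub_zero] at this
    have := le_abs_self t
    linarith [abs_le.mp ‹|t| ≤ T›]
  have key := integral_Ioi_of_hasDerivAt_of_tendsto' (a := 0)
    (fun t _ => hg t) (hA.add hB) htend
  simp only [zero_mul, sub_zero] at key
  rw [integral_add hA hB] at key
  linarith

set_option maxHeartbeats 1000000 in
lemma diffint_aux (w x : ℝ × ℝ) (hw : w ≠ 0) (h : ℝ × ℝ → ℝ)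
    (hh : ContDiff ℝ 1 h) (hs : HasCompactSupport h) :
    HasFDerivAt (fun y => ∫ t in Set.Ioi (0:ℝ), t * h (y + t • w))
      (∫ t in Set.Ioi (0:ℝ), t • fderiv ℝ h (x + t • w)) x ∧
    Integrable (fun t : ℝ => t • fderiv ℝ h (x + t • w)) (volume.restrict (Set.Ioi 0)) := by
  have hwpos : 0 < ‖w‖ := norm_pos_iff.mpr hw
  obtain ⟨C, hCb⟩ := ((hh.continuous_fderiv one_ne_zero).norm).bddAbove_range_of_hasCompactSupport
    ((hs.fderiv (𝕜 := ℝ)).norm)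
  have hC : ∀ z, ‖fderiv ℝ h z‖ ≤ C := fun z => hCb ⟨z, rfl⟩
  have hC0 : 0 ≤ C := le_trans (norm_nonneg _) (hC 0)
  obtain ⟨R, hR⟩ := hs.isBounded.subset_closedBall 0
  set R' : ℝ := max R 0 with hR'def
  have hRsub : tsupport h ⊆ Metric.closedBall 0 R' :=
    hR.trans (Metric.closedBall_subset_closedBall (le_max_left _ _))
  set T : ℝ := (R' + ‖x‖ + 1) / ‖w‖ with hTdef
  have hT0 : 0 ≤ T := by
    apply div_nonneg _ hwpos.le
    have : (0:ℝ) ≤ R' := le_max_right _ _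
    positivity
  have vanish : ∀ y ∈ Metric.ball x 1, ∀ a : ℝ, T < a → fderiv ℝ h (y + a • w) = 0 := by
    intro y hy a ha
    apply fderiv_of_notMem_tsupport
    intro hmem
    have h1 : ‖y + a • w‖ ≤ R' := by simpa using hRsub hmem
    have h2 : ‖a • w‖ ≤ ‖y + a • w‖ + ‖y‖ := by
      calc ‖a • w‖ = ‖(y + a • w) - y‖ := by rw [add_sub_cancel_left]
      _ ≤ ‖y + a • w‖ + ‖y‖ := norm_sub_le _ _
    have hy' : ‖y‖ < ‖x‖ + 1 := by
      have hxy : ‖y - x‖ < 1 := mem_ball_iff_norm.mp hy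
      have h4 : y = x + (y - x) := by abel
      calc ‖y‖ = ‖x + (y - x)‖ := by rw [← h4]
      _ ≤ ‖x‖ + ‖y - x‖ := norm_add_le _ _
      _ < ‖x‖ + 1 := by linarith
    have h5 : T * ‖w‖ < a * ‖w‖ := mul_lt_mul_of_pos_right ha hwpos
    have h6 : T * ‖w‖ = R' + ‖x‖ + 1 := div_mul_cancel₀ _ hwpos.ne'
    rw [norm_smul, Real.norm_eq_abs, abs_of_pos (lt_of_le_of_lt hT0 ha)] at h2
    linarith

  have hF'cont : Continuous fun a : ℝ => a • fderiv ℝ h (x + a • w) :=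
    continuous_id.smul ((hh.continuous_fderiv one_ne_zero).comp (by continuity))
  have h_bound : ∀ᵐ a ∂(volume.restrict (Set.Ioi (0:ℝ))), ∀ y ∈ Metric.ball x 1,
      ‖a • fderiv ℝ h (y + a • w)‖ ≤ Set.indicator (Set.Ioc (0:ℝ) T) (fun _ => T * C) a := by
    filter_upwards [ae_restrict_mem measurableSet_Ioi] with a ha y hy
    rcases le_or_gt a T with h1 | h1
    · rw [Set.indicator_of_mem (Set.mem_Ioc.mpr ⟨ha, h1⟩)]
      rw [norm_smul, Real.norm_eq_abs, abs_of_pos ha]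
      exact mul_le_mul h1 (hC _) (norm_nonneg _) hT0
    · rw [vanish y hy a h1, smul_zero, norm_zero]
      exact Set.indicator_nonneg (fun _ _ => by positivity) a
  have bound_int : Integrable (Set.indicator (Set.Ioc (0:ℝ) T) (fun _ => T * C))
      (volume.restrict (Set.Ioi (0:ℝ))) := by
    apply Integrable.restrict
    rw [integrable_indicator_iff measurableSet_Ioc]
    exact integrableOn_const measure_Ioc_lt_top.ne
  have h_diff : ∀ a : ℝ, ∀ y ∈ Metric.ball x 1,
      HasFDerivAt (fun y : ℝ × ℝ => a * h (y + a • w)) (a • fderiv ℝ h (y + a • w)) y := by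
    intro a y hy
    have h1 : HasFDerivAt (fun y : ℝ × ℝ => y + a • w) (ContinuousLinearMap.id ℝ (ℝ × ℝ)) y :=
      (hasFDerivAt_id y).add_const (a • w)
    have h2 := ((hh.differentiable one_ne_zero (y + a • w)).hasFDerivAt.comp y h1).const_mul a
    simpa [ContinuousLinearMap.comp_id] using h2
  have hmain := hasFDerivAt_integral_of_dominated_of_fderiv_le
    (μ := volume.restrict (Set.Ioi (0:ℝ)))
    (F := fun (y : ℝ × ℝ) (a : ℝ) => a * h (y + a • w))
    (F' := fun (y : ℝ × ℝ) (a : ℝ) => a • fderiv ℝ h (y + a • w))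
    (bound := Set.indicator (Set.Ioc (0:ℝ) T) (fun _ => T * C))
    (Metric.ball_mem_nhds x zero_lt_one)
    (Filter.Eventually.of_forall fun y => (Continuous.aestronglyMeasurable (by
      exact continuous_id.mul (hh.continuous.comp (by continuity)))))
    (integrable_aux w x hw h hh.continuous hs)
    hF'cont.aestronglyMeasurable
    h_bound bound_int
    (Filter.Eventually.of_forall fun a y hy => h_diff a y hy)
  refine ⟨hmain, ?_⟩
  exact Integrable.mono' bound_int hF'cont.aestronglyMeasurable
    (h_bound.mono fun a ha => ha x (Metric.mem_ball_self zero_lt_one))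

lemma Gapply (w x : ℝ × ℝ) (hw : w ≠ 0) (h : ℝ × ℝ → ℝ)
    (hh : ContDiff ℝ 1 h) (hs : HasCompactSupport h) (e : ℝ × ℝ) :
    (∫ t in Set.Ioi (0:ℝ), t • fderiv ℝ h (x + t • w)) e
      = ∫ t in Set.Ioi (0:ℝ), t * fderiv ℝ h (x + t • w) e := by
  rw [ContinuousLinearMap.integral_apply (diffint_aux w x hw h hh hs).2]
  simp [smul_eq_mul]

lemma hw_decomp (w : ℝ × ℝ) (L : (ℝ × ℝ) →L[ℝ] ℝ) :
    L w = w.1 * L (1, 0) + w.2 * L (0, 1) := by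
  have h1 : w = w.1 • ((1:ℝ), (0:ℝ)) + w.2 • ((0:ℝ), (1:ℝ)) := by
    simp [Prod.ext_iff]
  rw [h1, map_add, _root_.map_smul, _root_.map_smul]
  simp [smul_eq_mul]


lemma dir_aux (w x : ℝ × ℝ) (hw : w ≠ 0) (f₁ f₂ : ℝ × ℝ → ℝ)
    (hf₁ : IsC2c f₁) (hf₂ : IsC2c f₂) :
    HasFDerivAt (fun y => Xmom w (fun z => f₁ z * w.1 + f₂ z * w.2) y)
      (∫ t in Set.Ioi (0:ℝ), t • fderiv ℝ (fun z => f₁ z * w.1 + f₂ z * w.2) (x + t • w)) x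
    ∧ Xbeam w f₁ x
      = - (∫ t in Set.Ioi (0:ℝ),
            t • fderiv ℝ (fun z => f₁ z * w.1 + f₂ z * w.2) (x + t • w)) (1, 0)
        + w.2 * Xmom w (curlf f₁ f₂) x := by
  have hc1 : ContDiff ℝ 1 f₁ := hf₁.1.of_le one_le_two
  have hc2 : ContDiff ℝ 1 f₂ := hf₂.1.of_le one_le_two
  have hd1 : Differentiable ℝ f₁ := hc1.differentiable one_ne_zero
  have hd2 : Differentiable ℝ f₂ := hc2.differentiable one_ne_zero
  set g : ℝ × ℝ → ℝ := fun z => f₁ z * w.1 + f₂ z * w.2 with hgdef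
  have hgc : ContDiff ℝ 1 g := (hc1.mul contDiff_const).add (hc2.mul contDiff_const)
  have hgs : HasCompactSupport g := by
    have h1 : HasCompactSupport (f₁ * fun _ => w.1) := hf₁.2.mul_right
    have h2 : HasCompactSupport (f₂ * fun _ => w.2) := hf₂.2.mul_right
    exact h1.add h2
  have hfd : ∀ z, fderiv ℝ g z = w.1 • fderiv ℝ f₁ z + w.2 • fderiv ℝ f₂ z := by
    intro z
    rw [hgdef]
    rw [fderiv_fun_add ((hd1 z).mul_const _) ((hd2 z).mul_const _),
      fderiv_mul_const (hd1 z), fderiv_mul_const (hd2 z)]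
  have intA := integrable_aux w x hw (fun z => fderiv ℝ f₁ z (1, 0))
    (fderiv_apply_cont f₁ hc1 _) (fderiv_apply_supp f₁ hf₁.2 _)
  have intB := integrable_aux w x hw (fun z => fderiv ℝ f₂ z (1, 0))
    (fderiv_apply_cont f₂ hc2 _) (fderiv_apply_supp f₂ hf₂.2 _)
  have intC := integrable_aux w x hw (fun z => fderiv ℝ f₁ z (0, 1))
    (fderiv_apply_cont f₁ hc1 _) (fderiv_apply_supp f₁ hf₁.2 _)
  refine ⟨(diffint_aux w x hw g hgc hgs).1, ?_⟩
  have hG : (∫ t in Set.Ioi (0:ℝ), t • fderiv ℝ g (x + t • w)) (1, 0)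
      = w.1 * (∫ t in Set.Ioi (0:ℝ), t * fderiv ℝ f₁ (x + t • w) (1, 0))
        + w.2 * (∫ t in Set.Ioi (0:ℝ), t * fderiv ℝ f₂ (x + t • w) (1, 0)) := by
    rw [Gapply w x hw g hgc hgs]
    have heq : (fun t : ℝ => t * fderiv ℝ g (x + t • w) (1, 0))
        = fun t : ℝ => w.1 * (t * fderiv ℝ f₁ (x + t • w) (1, 0))
            + w.2 * (t * fderiv ℝ f₂ (x + t • w) (1, 0)) := by
      funext t
      rw [hfd]
      simp only [ContinuousLinearMap.add_apply, ContinuousLinearMap.coe_smul',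
        Pi.smul_apply, smul_eq_mul]
      ring
    rw [heq, integral_add (intA.const_mul _) (intB.const_mul _),
      integral_const_mul, integral_const_mul]
  have hM : Xmom w (curlf f₁ f₂) x
      = (∫ t in Set.Ioi (0:ℝ), t * fderiv ℝ f₂ (x + t • w) (1, 0))
        - (∫ t in Set.Ioi (0:ℝ), t * fderiv ℝ f₁ (x + t • w) (0, 1)) := by
    have heq : (fun t : ℝ => t * curlf f₁ f₂ (x + t • w))
        = fun t : ℝ => t * fderiv ℝ f₂ (x + t • w) (1, 0)
            - t * fderiv ℝ f₁ (x + t • w) (0, 1) := by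
      funext t; simp only [curlf]; ring
    show (∫ t in Set.Ioi (0:ℝ), t * curlf f₁ f₂ (x + t • w)) = _
    rw [heq, integral_sub intB intC]
  have hibp := ibp_aux w x hw f₁ hc1 hf₁.2
  have hsplit : (fun t : ℝ => t * fderiv ℝ f₁ (x + t • w) w)
      = fun t : ℝ => w.1 * (t * fderiv ℝ f₁ (x + t • w) (1, 0))
          + w.2 * (t * fderiv ℝ f₁ (x + t • w) (0, 1)) := by
    funext t; rw [hw_decomp w]; ring
  rw [hsplit, integral_add (intA.const_mul _) (intC.const_mul _),
    integral_const_mul, integral_const_mul] at hibp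
  have hXb : Xbeam w f₁ x = ∫ t in Set.Ioi (0:ℝ), f₁ (x + t • w) := rfl
  rw [hG, hM, hXb]
  linear_combination hibp

/-- `X_u f₁ - X_v f₁ = ∂(I f)/∂x₁ + u₂ X¹_u(curl f) - v₂ X¹_v(curl f)`. -/
theorem stmt8 (u v : ℝ × ℝ) (hu : u.1 ^ 2 + u.2 ^ 2 = 1) (hv : v.1 ^ 2 + v.2 ^ 2 = 1)
    (huv : LinearIndependent ℝ ![u, v])
    (f₁ f₂ : ℝ × ℝ → ℝ) (hf₁ : IsC2c f₁) (hf₂ : IsC2c f₂) (x : ℝ × ℝ) :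
    Xbeam u f₁ x - Xbeam v f₁ x
      = fderiv ℝ (VmomL u v f₁ f₂) x (1, 0)
        + u.2 * Xmom u (curlf f₁ f₂) x - v.2 * Xmom v (curlf f₁ f₂) x := by
  have hu0 : u ≠ 0 := by rintro rfl; norm_num at hu
  have hv0 : v ≠ 0 := by rintro rfl; norm_num at hv
  obtain ⟨hDu, hXu⟩ := dir_aux u x hu0 f₁ f₂ hf₁ hf₂
  obtain ⟨hDv, hXv⟩ := dir_aux v x hv0 f₁ f₂ hf₁ hf₂
  have hV : HasFDerivAt (VmomL u v f₁ f₂)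
      (-(∫ t in Set.Ioi (0:ℝ),
          t • fderiv ℝ (fun z => f₁ z * u.1 + f₂ z * u.2) (x + t • u))
        + ∫ t in Set.Ioi (0:ℝ),
            t • fderiv ℝ (fun z => f₁ z * v.1 + f₂ z * v.2) (x + t • v)) x :=
    hDu.neg.add hDv
  rw [hV.fderiv]
  simp only [ContinuousLinearMap.add_apply, ContinuousLinearMap.neg_apply]
  rw [hXu, hXv]
  ring
end
end

section
/- Let u = (u₁,u₂), v = (v₁,v₂) be linearly independent unit vectors in ℝ² and let f = (f₁, f₂) be a vector field on ℝ² with f₁, f₂ ∈ C²_c(ℝ²). Then for every x ∈ ℝ², X_u f₂(x) - X_v f₂(x) = ∂(I f)/∂x₂ (x) - u₁ · X¹_u(curl f)(x) + v₁ · X¹_v(curl f)(x). -/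
open MeasureTheory Matrix

noncomputable section

open Set Metric Filter

section helpers

variable {E : Type*} [NormedAddCommGroup E] [NormedSpace ℝ E]

lemma hcs_line {h : ℝ × ℝ → E} (hh : HasCompactSupport h) {u : ℝ × ℝ} (hu : u ≠ 0)
    (x : ℝ × ℝ) : HasCompactSupport (fun t : ℝ => h (x + t • u)) := by
  obtain ⟨R, hR⟩ := hh.isBounded.subset_closedBall 0
  have hu' : (0:ℝ) < ‖u‖ := norm_pos_iff.2 hu
  refine HasCompactSupport.intro (isCompact_Icc
    (a := -((R + ‖x‖) / ‖u‖)) (b := (R + ‖x‖) / ‖u‖)) ?_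
  intro t ht
  by_contra hne
  have hmem : x + t • u ∈ tsupport (fun y => h y) := subset_tsupport _ hne
  have h1 : ‖x + t • u‖ ≤ R := by simpa using hR hmem
  have h2 : ‖t • u‖ ≤ R + ‖x‖ := by
    calc ‖t • u‖ = ‖(x + t • u) - x‖ := by congr 1; abel
    _ ≤ ‖x + t • u‖ + ‖x‖ := norm_sub_le _ _
    _ ≤ R + ‖x‖ := by linarith
  have h3 : |t| ≤ (R + ‖x‖) / ‖u‖ := by
    rw [le_div_iff₀ hu']
    simpa [norm_smul, Real.norm_eq_abs] using h2
  exact ht (Set.mem_Icc.2 ⟨(abs_le.1 h3).1, (abs_le.1 h3).2⟩)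

lemma int_line {h : ℝ × ℝ → E} (hc : Continuous h) (hh : HasCompactSupport h)
    {u : ℝ × ℝ} (hu : u ≠ 0) (x : ℝ × ℝ) :
    IntegrableOn (fun t : ℝ => h (x + t • u)) (Set.Ioi 0) := by
  have hcont : Continuous (fun t : ℝ => h (x + t • u)) :=
    hc.comp (by continuity)
  exact (hcont.integrable_of_hasCompactSupport (hcs_line hh hu x)).integrableOn

lemma int_line_smul {h : ℝ × ℝ → E} (hc : Continuous h) (hh : HasCompactSupport h)
    {u : ℝ × ℝ} (hu : u ≠ 0) (x : ℝ × ℝ) :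
    IntegrableOn (fun t : ℝ => t • h (x + t • u)) (Set.Ioi 0) := by
  have hcont : Continuous (fun t : ℝ => t • h (x + t • u)) :=
    continuous_id.smul (hc.comp (by continuity))
  have hcs : HasCompactSupport (fun t : ℝ => t • h (x + t • u)) := by
    refine (hcs_line hh hu x).mono ?_
    intro t ht
    simp only [Function.mem_support] at ht ⊢
    intro h0
    exact ht (by rw [h0, smul_zero])
  exact (hcont.integrable_of_hasCompactSupport hcs).integrableOn

end helpers

/-- Differentiation under the integral sign for the first-moment beam transform. -/
lemma xmom_hasFDerivAt {g : ℝ × ℝ → ℝ} (hg : ContDiff ℝ 1 g) (hgc : HasCompactSupport g)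
    {u : ℝ × ℝ} (hu : u ≠ 0) (x : ℝ × ℝ) :
    HasFDerivAt (fun x' => ∫ t in Set.Ioi (0:ℝ), t * g (x' + t • u))
      (∫ t in Set.Ioi (0:ℝ), t • fderiv ℝ g (x + t • u)) x := by
  have hu' : (0:ℝ) < ‖u‖ := norm_pos_iff.2 hu
  have hdg_cont : Continuous (fderiv ℝ g) := hg.continuous_fderiv one_ne_zero
  have hdg_cs : HasCompactSupport (fderiv ℝ g) := hgc.fderiv (𝕜 := ℝ)
  obtain ⟨C, hC⟩ := hdg_cont.bounded_above_of_compact_support hdg_cs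
  have hC0 : 0 ≤ C := le_trans (norm_nonneg _) (hC 0)
  obtain ⟨R, hR⟩ := hdg_cs.isBounded.subset_closedBall 0
  set T : ℝ := (R + ‖x‖ + 1) / ‖u‖ with hTdef
  have hzero : ∀ t : ℝ, T < t → ∀ x' ∈ ball x 1, fderiv ℝ g (x' + t • u) = 0 := by
    intro t ht x' hx'
    apply image_eq_zero_of_notMem_tsupport
    intro hmem
    have h1 : ‖x' + t • u‖ ≤ R := by simpa using hR hmem
    have hx'n : ‖x'‖ ≤ ‖x‖ + 1 := by
      have : ‖x' - x‖ < 1 := by simpa [dist_eq_norm] using hx'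
      calc ‖x'‖ = ‖(x' - x) + x‖ := by congr 1; abel
      _ ≤ ‖x' - x‖ + ‖x‖ := norm_add_le _ _
      _ ≤ ‖x‖ + 1 := by linarith
    have h2 : ‖t • u‖ ≤ R + ‖x‖ + 1 := by
      calc ‖t • u‖ = ‖(x' + t • u) - x'‖ := by congr 1; abel
      _ ≤ ‖x' + t • u‖ + ‖x'‖ := norm_sub_le _ _
      _ ≤ R + ‖x‖ + 1 := by linarith
    have h3 : |t| ≤ T := by
      rw [hTdef, le_div_iff₀ hu']
      simpa [norm_smul, Real.norm_eq_abs] using h2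
    linarith [le_abs_self t]
  have key := hasFDerivAt_integral_of_dominated_of_fderiv_le
    (μ := volume.restrict (Set.Ioi (0:ℝ)))
    (F := fun x' (t : ℝ) => t * g (x' + t • u))
    (F' := fun x' (t : ℝ) => t • fderiv ℝ g (x' + t • u))
    (x₀ := x)
    (bound := Set.indicator (Set.Icc (0:ℝ) T) (fun _ => T * C))
    (s := ball x 1) (ball_mem_nhds x one_pos)
    (Filter.Eventually.of_forall fun x' =>
      (Continuous.aestronglyMeasurable (by
        exact continuous_id.mul (hg.continuous.comp (by continuity)))))
    (by
      have := int_line_smul (E := ℝ) hg.continuous hgc hu x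
      simpa [smul_eq_mul, IntegrableOn] using this)
    ((continuous_id.smul (hdg_cont.comp (by continuity))).aestronglyMeasurable)
    ?_ ?_ ?_
  · exact key
  · -- bound
    rw [ae_restrict_iff' measurableSet_Ioi]
    refine Filter.Eventually.of_forall fun t ht => fun x' hx' => ?_
    have ht0 : 0 < t := ht
    rcases le_or_gt t T with h | h
    · have htm : t ∈ Set.Icc (0:ℝ) T := ⟨ht0.le, h⟩
      rw [Set.indicator_of_mem htm]
      calc ‖t • fderiv ℝ g (x' + t • u)‖ = |t| * ‖fderiv ℝ g (x' + t • u)‖ := by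
            rw [norm_smul, Real.norm_eq_abs]
      _ ≤ T * C := by
        apply mul_le_mul
        · rw [abs_of_pos ht0]; exact h
        · exact hC _
        · exact norm_nonneg _
        · linarith
    · have htm : t ∉ Set.Icc (0:ℝ) T := fun hm => absurd hm.2 (not_le.2 h)
      rw [Set.indicator_of_notMem htm]
      show ‖t • fderiv ℝ g (x' + t • u)‖ ≤ 0
      rw [hzero t h x' hx']
      simp
  · -- bound integrable
    rw [integrable_indicator_iff measurableSet_Icc]
    refine integrableOn_const (ne_of_lt ?_)
    exact lt_of_le_of_lt (Measure.restrict_apply_le _ _) measure_Icc_lt_top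
  · -- differentiability
    refine Filter.Eventually.of_forall fun t => fun x' _ => ?_
    have h1 : HasFDerivAt (fun y : ℝ × ℝ => y + t • u)
        (ContinuousLinearMap.id ℝ (ℝ × ℝ)) x' := (hasFDerivAt_id x').add_const _
    have h2 : HasFDerivAt g (fderiv ℝ g (x' + t • u)) (x' + t • u) :=
      ((hg.differentiable one_ne_zero) _).hasFDerivAt
    have h3 := h2.comp x' h1
    rw [ContinuousLinearMap.comp_id] at h3
    exact h3.const_mul t

lemma deriv_line {g : ℝ × ℝ → ℝ} (hg : ContDiff ℝ 1 g) (u : ℝ × ℝ) (x : ℝ × ℝ) (t : ℝ) :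
    HasDerivAt (fun s : ℝ => g (x + s • u)) (fderiv ℝ g (x + t • u) u) t := by
  have h1 : HasDerivAt (fun s : ℝ => x + s • u) u t := by
    simpa using ((hasDerivAt_id t).smul_const u).const_add x
  have h2 : HasFDerivAt g (fderiv ℝ g (x + t • u)) (x + t • u) :=
    ((hg.differentiable one_ne_zero) _).hasFDerivAt
  exact h2.comp_hasDerivAt t h1

lemma hcs_fderiv_apply {g : ℝ × ℝ → ℝ} (hgc : HasCompactSupport g) (w : ℝ × ℝ) :
    HasCompactSupport (fun y => fderiv ℝ g y w) := by
  refine HasCompactSupport.intro (hgc.fderiv (𝕜 := ℝ)) fun y hy => ?_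
  rw [image_eq_zero_of_notMem_tsupport hy]
  rfl

/-- Integration by parts: `∫₀^∞ t (d/dt) g(x+tu) dt = -∫₀^∞ g(x+tu) dt`. -/
lemma ibp_line {g : ℝ × ℝ → ℝ} (hg : ContDiff ℝ 1 g) (hgc : HasCompactSupport g)
    {u : ℝ × ℝ} (hu : u ≠ 0) (x : ℝ × ℝ) :
    ∫ t in Set.Ioi (0:ℝ), t * (fderiv ℝ g (x + t • u) u)
      = - ∫ t in Set.Ioi (0:ℝ), g (x + t • u) := by
  set φ : ℝ → ℝ := fun t => g (x + t • u) with hφdef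
  set D : ℝ → ℝ := fun t => fderiv ℝ g (x + t • u) u with hDdef
  have hφc : Continuous φ := hg.continuous.comp (by continuity)
  have hφcs : HasCompactSupport φ := hcs_line hgc hu x
  have Int1 : IntegrableOn φ (Set.Ioi 0) := int_line hg.continuous hgc hu x
  have Int2 : IntegrableOn (fun t => t * D t) (Set.Ioi 0) := by
    have := int_line_smul (E := ℝ) (h := fun y => fderiv ℝ g y u)
      ((hg.continuous_fderiv one_ne_zero).clm_apply continuous_const)
      (hcs_fderiv_apply hgc u) hu x
    simpa [smul_eq_mul, hDdef] using this
  set F : ℝ → ℝ := fun t => t * φ t with hFdef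
  have hFd : ∀ t : ℝ, HasDerivAt F (φ t + t * D t) t := by
    intro t
    have := (hasDerivAt_id' t).mul (deriv_line hg u x t)
    simp only [one_mul] at this
    exact this
  have hFcs : HasCompactSupport F := by
    refine hφcs.mono fun t ht => ?_
    simp only [Function.mem_support] at ht ⊢
    intro h0
    exact ht (show t * φ t = 0 by rw [h0, mul_zero])
  have htend : Filter.Tendsto F Filter.atTop (nhds 0) := by
    obtain ⟨S, hS⟩ := hFcs.isBounded.subset_closedBall 0
    have hev : F =ᶠ[Filter.atTop] (fun _ => (0:ℝ)) := by
      refine Filter.eventually_atTop.2 ⟨S + 1, fun t ht => ?_⟩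
      refine image_eq_zero_of_notMem_tsupport fun hmem => ?_
      have h1 := hS hmem
      rw [Metric.mem_closedBall, Real.dist_eq, sub_zero] at h1
      linarith [le_abs_self t]
    exact Filter.Tendsto.congr' hev.symm tendsto_const_nhds
  have key := integral_Ioi_of_hasDerivAt_of_tendsto
    (f := F) (f' := fun t => φ t + t * D t) (a := 0) (m := 0)
    ((continuous_id.mul hφc).continuousWithinAt)
    (fun t _ => hFd t) (Int1.add Int2) htend
  have hF0 : F 0 = 0 := by simp [hFdef]
  rw [hF0, sub_zero] at key
  have hsplit := integral_add Int1 Int2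
  have : ∫ t in Set.Ioi (0:ℝ), (φ t + t * D t) = (∫ t in Set.Ioi (0:ℝ), φ t) + ∫ t in Set.Ioi (0:ℝ), t * D t := hsplit
  rw [this] at key
  linarith [key]

lemma fderiv_dot (f₁ f₂ : ℝ × ℝ → ℝ) (hf₁ : IsC2c f₁) (hf₂ : IsC2c f₂)
    (u : ℝ × ℝ) (y : ℝ × ℝ) :
    fderiv ℝ (fun y => f₁ y * u.1 + f₂ y * u.2) y (0, 1)
      = fderiv ℝ f₂ y u - u.1 * curlf f₁ f₂ y := by
  have hd1 : HasFDerivAt f₁ (fderiv ℝ f₁ y) y :=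
    ((hf₁.1.differentiable two_ne_zero) y).hasFDerivAt
  have hd2 : HasFDerivAt f₂ (fderiv ℝ f₂ y) y :=
    ((hf₂.1.differentiable two_ne_zero) y).hasFDerivAt
  have hg : HasFDerivAt (fun y => f₁ y * u.1 + f₂ y * u.2)
      (u.1 • fderiv ℝ f₁ y + u.2 • fderiv ℝ f₂ y) y :=
    (hd1.mul_const u.1).add (hd2.mul_const u.2)
  rw [hg.fderiv]
  have hud : (u : ℝ × ℝ) = u.1 • ((1:ℝ), (0:ℝ)) + u.2 • ((0:ℝ), (1:ℝ)) := by
    simp [Prod.ext_iff]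
  have h2 : fderiv ℝ f₂ y u
      = u.1 * fderiv ℝ f₂ y (1, 0) + u.2 * fderiv ℝ f₂ y (0, 1) := by
    conv_lhs => rw [hud]
    rw [map_add, _root_.map_smul, _root_.map_smul]
    simp [smul_eq_mul]
  simp only [ContinuousLinearMap.add_apply, ContinuousLinearMap.coe_smul',
    Pi.smul_apply, smul_eq_mul, h2, curlf]
  ring

lemma hcs_dot (f₁ f₂ : ℝ × ℝ → ℝ) (hf₁ : IsC2c f₁) (hf₂ : IsC2c f₂) (a b : ℝ) :
    HasCompactSupport (fun y => f₁ y * a + f₂ y * b) :=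
  (hf₁.2.mul_right).add (hf₂.2.mul_right)

lemma cd_dot (f₁ f₂ : ℝ × ℝ → ℝ) (hf₁ : IsC2c f₁) (hf₂ : IsC2c f₂) (a b : ℝ) :
    ContDiff ℝ 1 (fun y => f₁ y * a + f₂ y * b) :=
  ((hf₁.1.of_le one_le_two).mul contDiff_const).add
    ((hf₂.1.of_le one_le_two).mul contDiff_const)

lemma curl_cont (f₁ f₂ : ℝ × ℝ → ℝ) (hf₁ : IsC2c f₁) (hf₂ : IsC2c f₂) :
    Continuous (curlf f₁ f₂) :=
  ((hf₂.1.continuous_fderiv two_ne_zero).clm_apply continuous_const).sub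
    ((hf₁.1.continuous_fderiv two_ne_zero).clm_apply continuous_const)

lemma curl_hcs (f₁ f₂ : ℝ × ℝ → ℝ) (hf₁ : IsC2c f₁) (hf₂ : IsC2c f₂) :
    HasCompactSupport (curlf f₁ f₂) := by
  have hA := hcs_fderiv_apply hf₂.2 (1, 0)
  have hB := hcs_fderiv_apply hf₁.2 (0, 1)
  refine HasCompactSupport.intro (hA.union hB) fun y hy => ?_
  simp only [Set.mem_union, not_or] at hy
  unfold curlf
  rw [image_eq_zero_of_notMem_tsupport hy.1, image_eq_zero_of_notMem_tsupport hy.2, sub_zero]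

/-- The key per-direction computation. -/
lemma key1 (f₁ f₂ : ℝ × ℝ → ℝ) (hf₁ : IsC2c f₁) (hf₂ : IsC2c f₂)
    {u : ℝ × ℝ} (hu : u ≠ 0) (x : ℝ × ℝ) :
    fderiv ℝ (fun x' => ∫ t in Set.Ioi (0:ℝ), t * (f₁ (x' + t • u) * u.1 + f₂ (x' + t • u) * u.2)) x (0, 1)
      = - (∫ t in Set.Ioi (0:ℝ), f₂ (x + t • u))
        - u.1 * ∫ t in Set.Ioi (0:ℝ), t * curlf f₁ f₂ (x + t • u) := by
  set g : ℝ × ℝ → ℝ := fun y => f₁ y * u.1 + f₂ y * u.2 with hgdef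
  have hg : ContDiff ℝ 1 g := cd_dot f₁ f₂ hf₁ hf₂ u.1 u.2
  have hgc : HasCompactSupport g := hcs_dot f₁ f₂ hf₁ hf₂ u.1 u.2
  have hA := xmom_hasFDerivAt hg hgc hu x
  rw [hA.fderiv]
  have hint : Integrable (fun t : ℝ => t • fderiv ℝ g (x + t • u))
      (volume.restrict (Set.Ioi 0)) :=
    int_line_smul (hg.continuous_fderiv one_ne_zero) (hgc.fderiv (𝕜 := ℝ)) hu x
  rw [ContinuousLinearMap.integral_apply hint ((0:ℝ), (1:ℝ))]
  have hpt : ∀ t : ℝ, (t • fderiv ℝ g (x + t • u)) ((0:ℝ), (1:ℝ))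
      = t * (fderiv ℝ f₂ (x + t • u) u) - u.1 * (t * curlf f₁ f₂ (x + t • u)) := by
    intro t
    rw [ContinuousLinearMap.smul_apply, smul_eq_mul,
      fderiv_dot f₁ f₂ hf₁ hf₂ u (x + t • u)]
    ring
  rw [integral_congr_ae (Filter.Eventually.of_forall hpt)]
  have I1 : IntegrableOn (fun t : ℝ => t * (fderiv ℝ f₂ (x + t • u) u)) (Set.Ioi 0) := by
    have := int_line_smul (E := ℝ) (h := fun y => fderiv ℝ f₂ y u)
      ((hf₂.1.continuous_fderiv two_ne_zero).clm_apply continuous_const)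
      (hcs_fderiv_apply hf₂.2 u) hu x
    simpa [smul_eq_mul] using this
  have I2 : IntegrableOn (fun t : ℝ => u.1 * (t * curlf f₁ f₂ (x + t • u))) (Set.Ioi 0) := by
    have := int_line_smul (E := ℝ) (h := curlf f₁ f₂)
      (curl_cont f₁ f₂ hf₁ hf₂) (curl_hcs f₁ f₂ hf₁ hf₂) hu x
    simpa [smul_eq_mul, IntegrableOn] using this.const_mul u.1
  rw [integral_sub I1 I2, ibp_line (hf₂.1.of_le one_le_two) hf₂.2 hu x,
    integral_const_mul]

/-- `X_u f₂ - X_v f₂ = ∂(I f)/∂x₂ - u₁ X¹_u(curl f) + v₁ X¹_v(curl f)`. -/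
theorem stmt9 (u v : ℝ × ℝ) (hu : u.1 ^ 2 + u.2 ^ 2 = 1) (hv : v.1 ^ 2 + v.2 ^ 2 = 1)
    (huv : LinearIndependent ℝ ![u, v])
    (f₁ f₂ : ℝ × ℝ → ℝ) (hf₁ : IsC2c f₁) (hf₂ : IsC2c f₂) (x : ℝ × ℝ) :
    Xbeam u f₂ x - Xbeam v f₂ x
      = fderiv ℝ (VmomL u v f₁ f₂) x (0, 1)
        - u.1 * Xmom u (curlf f₁ f₂) x + v.1 * Xmom v (curlf f₁ f₂) x := by
  have hu0 : u ≠ 0 := by rintro rfl; norm_num at hu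
  have hv0 : v ≠ 0 := by rintro rfl; norm_num at hv
  have hf₁' : IsC2c f₁ := hf₁
  have hf₂' : IsC2c f₂ := hf₂
  have hAu := xmom_hasFDerivAt (cd_dot f₁ f₂ hf₁' hf₂' u.1 u.2)
    (hcs_dot f₁ f₂ hf₁' hf₂' u.1 u.2) hu0 x
  have hAv := xmom_hasFDerivAt (cd_dot f₁ f₂ hf₁' hf₂' v.1 v.2)
    (hcs_dot f₁ f₂ hf₁' hf₂' v.1 v.2) hv0 x
  have hfd : fderiv ℝ (VmomL u v f₁ f₂) x
      = -(∫ t in Set.Ioi (0:ℝ), t • fderiv ℝ (fun y => f₁ y * u.1 + f₂ y * u.2) (x + t • u))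
        + ∫ t in Set.Ioi (0:ℝ), t • fderiv ℝ (fun y => f₁ y * v.1 + f₂ y * v.2) (x + t • v) :=
    HasFDerivAt.fderiv (by exact hAu.neg.add hAv)
  rw [hfd, ContinuousLinearMap.add_apply, ContinuousLinearMap.neg_apply,
    ← hAu.fderiv, ← hAv.fderiv, key1 f₁ f₂ hf₁' hf₂' hu0 x, key1 f₁ f₂ hf₁' hf₂' hv0 x]
  simp only [Xbeam, Xmom]
  ring
end
end

section
/- Let γ and ψ be unit vectors in ℝ² with ψ·γ ≠ 0, and let h : ℝ² → ℝ be a twice continuously differentiable function with compact support. Then for every s ∈ ℝ, (d/ds) R(X_γ h)(ψ, s) = -(1/(ψ·γ)) · R h(ψ, s). -/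
open MeasureTheory Matrix

noncomputable section

open Set in
private lemma shift_Ioi' (G : ℝ → ℝ) (s : ℝ) :
    (∫ x in Ioi (0:ℝ), G (s + x)) = ∫ x in Ioi s, G x := by
  have A : MeasurableEmbedding fun x : ℝ => s + x :=
    (Homeomorph.addLeft s).measurableEmbedding
  have h1 := A.setIntegral_map (μ := volume) G (Ioi s)
  rw [map_add_left_eq_self, preimage_const_add_Ioi, sub_self] at h1
  exact h1.symm

open Set in
private lemma shift_Iic' (G : ℝ → ℝ) (s : ℝ) :
    (∫ x in Iic (0:ℝ), G (s + x)) = ∫ x in Iic s, G x := by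
  have A : MeasurableEmbedding fun x : ℝ => s + x :=
    (Homeomorph.addLeft s).measurableEmbedding
  have h1 := A.setIntegral_map (μ := volume) G (Iic s)
  rw [map_add_left_eq_self, preimage_const_add_Iic, sub_self] at h1
  exact h1.symm

/-- Orthonormal coordinate homeomorphism. -/
def coordHomeo (ψ : ℝ × ℝ) (hψ : ψ.1 ^ 2 + ψ.2 ^ 2 = 1) : (ℝ × ℝ) ≃ₜ (ℝ × ℝ) where
  toFun z := z.1 • ψ + z.2 • perp2 ψ
  invFun w := (dot2 ψ w, dot2 (perp2 ψ) w)
  left_inv z := by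
    simp only [dot2, perp2, Prod.ext_iff, Prod.smul_fst, Prod.smul_snd, Prod.fst_add,
      Prod.snd_add, smul_eq_mul]
    constructor
    · linear_combination z.1 * hψ
    · linear_combination z.2 * hψ
  right_inv w := by
    simp only [dot2, perp2, Prod.ext_iff, Prod.smul_fst, Prod.smul_snd, Prod.fst_add,
      Prod.snd_add, smul_eq_mul]
    constructor
    · linear_combination w.1 * hψ
    · linear_combination w.2 * hψ
  continuous_toFun := by fun_prop
  continuous_invFun := by unfold dot2 perp2; fun_prop

/-- Shear homeomorphism `(t, r) ↦ (s + a r, t + b r)`. -/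
def shearHomeo (s a b : ℝ) (ha : a ≠ 0) : (ℝ × ℝ) ≃ₜ (ℝ × ℝ) where
  toFun q := (s + a * q.2, q.1 + b * q.2)
  invFun w := (w.2 - b * ((w.1 - s) / a), (w.1 - s) / a)
  left_inv q := by
    simp only [Prod.ext_iff]
    constructor <;> field_simp <;> ring
  right_inv w := by
    simp only [Prod.ext_iff]
    constructor <;> field_simp <;> ring
  continuous_toFun := by fun_prop
  continuous_invFun := by fun_prop

/-- `(d/ds) R(X_γ h)(ψ, s) = -(1/(ψ·γ)) R h (ψ, s)`. -/
theorem stmt14 (γ ψ : ℝ × ℝ) (hγ : γ.1 ^ 2 + γ.2 ^ 2 = 1) (hψ : ψ.1 ^ 2 + ψ.2 ^ 2 = 1)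
    (hψγ : dot2 ψ γ ≠ 0)
    (h : ℝ × ℝ → ℝ) (hh : ContDiff ℝ 2 h) (hhc : HasCompactSupport h) (s : ℝ) :
    deriv (fun s' => Radon2 (Xbeam γ h) ψ s') s
      = -(1 / dot2 ψ γ) * Radon2 h ψ s := by
  classical
  open Set in
  set a := dot2 ψ γ with ha_def
  set b := dot2 (perp2 ψ) γ with hb_def
  set E1 := coordHomeo ψ hψ with hE1
  set g : ℝ × ℝ → ℝ := fun z => h (z.1 • ψ + z.2 • perp2 ψ) with hg_def
  have hgc : Continuous g := hh.continuous.comp E1.continuous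
  have hgsupp : HasCompactSupport g := hhc.comp_homeomorph E1
  set G : ℝ → ℝ := fun p => ∫ t : ℝ, g (p, t) with hG_def
  have hGR : ∀ p, G p = Radon2 h ψ p := fun p => rfl
  -- support bound
  obtain ⟨M, hMsub⟩ := hgsupp.isBounded.subset_closedBall (0 : ℝ × ℝ)
  have hzero : ∀ p t : ℝ, M < max |p| |t| → g (p, t) = 0 := by
    intro p t hpt
    by_contra hne
    have hmem : (p, t) ∈ tsupport g := subset_tsupport g hne
    have := hMsub hmem
    rw [Metric.mem_closedBall, dist_zero_right, Prod.norm_def] at this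
    simp only [Real.norm_eq_abs] at this
    exact absurd this (not_le.mpr hpt)
  obtain ⟨C, hC⟩ := hgsupp.exists_bound_of_continuous hgc
  -- continuity of G
  have hGcont : Continuous G := by
    apply continuous_of_dominated (bound := (Icc (-M) M).indicator fun _ => C)
    · intro p
      exact (hgc.comp (continuous_const.prodMk continuous_id)).aestronglyMeasurable
    · intro p
      filter_upwards with t
      by_cases hT : |t| ≤ M
      · rw [Set.indicator_of_mem (Set.mem_Icc.mpr (abs_le.mp hT))]
        exact hC _
      · rw [Set.indicator_of_notMem (by simpa [Set.mem_Icc, abs_le] using hT),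
          hzero p t (lt_of_not_ge (fun h' => hT (le_trans (le_max_right _ _) h')))]
        simp
    · rw [integrable_indicator_iff measurableSet_Icc]
      exact integrableOn_const measure_Icc_lt_top.ne
    · filter_upwards with t
      exact hgc.comp (continuous_id.prodMk continuous_const)
  have hGzero : ∀ p : ℝ, M < |p| → G p = 0 := by
    intro p hp
    have : (fun t => g (p, t)) = fun _ => (0 : ℝ) := by
      funext t
      exact hzero p t (lt_of_lt_of_le hp (le_max_left _ _))
    rw [hG_def]
    simp only [this, integral_zero]
  have hGsupp : HasCompactSupport G := by
    apply HasCompactSupport.intro (isCompact_Icc (a := -M) (b := M))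
    intro x hx
    exact hGzero x (not_le.mp fun hle => hx (Set.mem_Icc.mpr (abs_le.mp hle)))
  have hGintg : Integrable G := hGcont.integrable_of_hasCompactSupport hGsupp
  -- the key identity
  have key : ∀ s' : ℝ, Radon2 (Xbeam γ h) ψ s' = ∫ r in Ioi (0:ℝ), G (s' + a * r) := by
    intro s'
    have hpt : ∀ t r : ℝ, (s' • ψ + t • perp2 ψ) + r • γ
        = (s' + a * r) • ψ + (t + b * r) • perp2 ψ := by
      intro t r
      simp only [ha_def, hb_def, dot2, perp2, Prod.ext_iff, Prod.smul_fst, Prod.smul_snd,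
        Prod.fst_add, Prod.snd_add, smul_eq_mul]
      constructor
      · linear_combination (-(r * γ.1)) * hψ
      · linear_combination (-(r * γ.2)) * hψ
    set Φ : ℝ × ℝ → ℝ := fun q => g (s' + a * q.2, q.1 + b * q.2) with hΦ_def
    have hΦeq : Φ = g ∘ (shearHomeo s' a b hψγ) := rfl
    have hΦc : Continuous Φ := hgc.comp (shearHomeo s' a b hψγ).continuous
    have hΦsupp : HasCompactSupport Φ := by
      rw [hΦeq]; exact hgsupp.comp_homeomorph _
    have hΦint : Integrable Φ ((volume : Measure ℝ).prod (volume.restrict (Ioi (0:ℝ)))) := by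
      have h0 : Integrable Φ (volume : Measure (ℝ × ℝ)) :=
        hΦc.integrable_of_hasCompactSupport hΦsupp
      rw [Measure.volume_eq_prod] at h0
      have h1 := h0.restrict (s := Set.univ ×ˢ Ioi (0:ℝ))
      rwa [← Measure.prod_restrict, Measure.restrict_univ] at h1
    calc Radon2 (Xbeam γ h) ψ s'
        = ∫ t : ℝ, ∫ r in Ioi (0:ℝ), Φ (t, r) := by
          unfold Radon2 Xbeam
          congr 1
          funext t
          congr 1
          funext r
          rw [hpt t r]
      _ = ∫ r in Ioi (0:ℝ), ∫ t : ℝ, Φ (t, r) :=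
          integral_integral_swap (f := fun t r => Φ (t, r)) hΦint
      _ = ∫ r in Ioi (0:ℝ), G (s' + a * r) := by
          congr 1
          funext r
          exact integral_add_right_eq_self (fun t => g (s' + a * r, t)) (b * r)
  rcases lt_or_gt_of_ne hψγ with haneg | hapos
  · -- case a < 0
    set c : ℝ := -a with hc_def
    have hcpos : 0 < c := by simp [hc_def]; linarith
    have key2 : ∀ s' : ℝ, Radon2 (Xbeam γ h) ψ s' = c⁻¹ * ∫ x in Iic s', G x := by
      intro s'
      rw [key s']
      have hrw : ∀ r : ℝ, s' + a * r = s' - c * r := by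
        intro r; rw [hc_def]; ring
      simp_rw [hrw]
      have h1 : (∫ r in Ioi (0:ℝ), (fun x => G (s' - x)) (c * r))
          = c⁻¹ • ∫ x in Ioi (c * 0), (fun x => G (s' - x)) x :=
        integral_comp_mul_left_Ioi (fun x => G (s' - x)) 0 hcpos
      simp only [mul_zero] at h1
      rw [h1]
      have h2 : (∫ x in Ioi (0:ℝ), (fun y => G (s' + y)) (-x))
          = ∫ x in Iic (-(0:ℝ)), (fun y => G (s' + y)) x :=
        integral_comp_neg_Ioi 0 (fun y => G (s' + y))
      simp only [neg_zero] at h2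
      have h3 : (fun x => G (s' - x)) = fun x => (fun y => G (s' + y)) (-x) := by
        funext x; simp [sub_eq_add_neg]
      rw [h3, h2, shift_Iic', smul_eq_mul]
    set A : ℝ := min (-M - 1) (s - 1) with hA_def
    have hAs : A < s := lt_of_le_of_lt (min_le_right _ _) (by linarith)
    have hev : (fun s' => Radon2 (Xbeam γ h) ψ s')
        =ᶠ[nhds s] fun s' => c⁻¹ * ∫ x in A..s', G x := by
      filter_upwards [Ioi_mem_nhds hAs] with s' hs'
      rw [key2 s']
      congr 1
      have hsplit : ∫ x in Iic s', G x = (∫ x in Iic A, G x) + ∫ x in Ioc A s', G x := by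
        rw [← setIntegral_union (Set.Iic_disjoint_Ioc le_rfl) measurableSet_Ioc
          hGintg.integrableOn hGintg.integrableOn, Set.Iic_union_Ioc_eq_Iic (le_of_lt hs')]
      have hzA : ∫ x in Iic A, G x = 0 := by
        apply setIntegral_eq_zero_of_forall_eq_zero
        intro x hx
        apply hGzero
        have hx' : x ≤ -M - 1 := le_trans hx (min_le_left _ _)
        have : M < -x := by linarith
        exact lt_of_lt_of_le this (neg_le_abs x)
      rw [hsplit, hzA, zero_add, intervalIntegral.integral_of_le (le_of_lt hs')]
    rw [hev.deriv_eq]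
    have hd : HasDerivAt (fun u => ∫ x in A..u, G x) (G s) s :=
      intervalIntegral.integral_hasDerivAt_right (hGcont.intervalIntegrable A s)
        (hGcont.stronglyMeasurableAtFilter volume (nhds s)) hGcont.continuousAt
    rw [(hd.const_mul c⁻¹).deriv, ← hGR s]
    rw [hc_def]
    field_simp
  · -- case a > 0
    have key2 : ∀ s' : ℝ, Radon2 (Xbeam γ h) ψ s' = a⁻¹ * ∫ x in Ioi s', G x := by
      intro s'
      rw [key s']
      have h1 : (∫ r in Ioi (0:ℝ), (fun x => G (s' + x)) (a * r))
          = a⁻¹ • ∫ x in Ioi (a * 0), (fun x => G (s' + x)) x :=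
        integral_comp_mul_left_Ioi (fun x => G (s' + x)) 0 hapos
      simp only [mul_zero] at h1
      rw [h1, shift_Ioi', smul_eq_mul]
    set B : ℝ := max (M + 1) (s + 1) with hB_def
    have hsB : s < B := lt_of_lt_of_le (by linarith) (le_max_right _ _)
    have hev : (fun s' => Radon2 (Xbeam γ h) ψ s')
        =ᶠ[nhds s] fun s' => a⁻¹ * ∫ x in s'..B, G x := by
      filter_upwards [Iio_mem_nhds hsB] with s' hs'
      rw [key2 s']
      congr 1
      have hsplit : ∫ x in Ioi s', G x = (∫ x in Ioc s' B, G x) + ∫ x in Ioi B, G x := by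
        rw [← setIntegral_union (Set.Ioc_disjoint_Ioi le_rfl) measurableSet_Ioi
          hGintg.integrableOn hGintg.integrableOn, Set.Ioc_union_Ioi_eq_Ioi (le_of_lt hs')]
      have hzB : ∫ x in Ioi B, G x = 0 := by
        apply setIntegral_eq_zero_of_forall_eq_zero
        intro x hx
        apply hGzero
        have hx' : M + 1 ≤ B := le_max_left _ _
        have : M < x := by
          have := Set.mem_Ioi.mp hx
          linarith
        exact lt_of_lt_of_le this (le_abs_self x)
      rw [hsplit, hzB, add_zero, intervalIntegral.integral_of_le (le_of_lt hs')]
    rw [hev.deriv_eq]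
    have hd : HasDerivAt (fun u => ∫ x in u..B, G x) (-G s) s :=
      intervalIntegral.integral_hasDerivAt_left (hGcont.intervalIntegrable s B)
        (hGcont.stronglyMeasurableAtFilter volume (nhds s)) hGcont.continuousAt
    rw [(hd.const_mul a⁻¹).deriv, ← hGR s]
    field_simp
end
end
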